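/- Let A ∈ ℝ^{4×4} be the matrix with rows (1, −1/3, −1/3, 1/3), (0, 2√2/3, −√2/3, √2/3), (0, 0, √6/3, −√6/12), and (0, 0, 0, √10/4), and let S = {1,2,3}. Then: (i) every column of A has unit Euclidean norm and A is invertible (in particular A_{•S} has full column rank); (ii) ‖(A_{•S}ᵀ A_{•S})⁻¹ A_{•S}ᵀ A_{•4}‖₁ = 1, where ‖·‖₁ denotes the (vector/matrix) 1-norm; (iii) for every z ∈ ℝ⁴ with z₄ = 0 and z₁·z₂·z₃ ≠ 0, one has max_{j∈{1,2,3}} |(AᵀA z)_j| > |(AᵀA z)₄|; (iv) for z = (1, 1, 0, 0)ᵀ, one has |(AᵀA z)₁| = |(AᵀA z)₂| = |(AᵀA z)₃| = |(AᵀA z)₄| = 2/3, so that max_{j∈{1,2,3}} |(AᵀA z)_j| = |(AᵀA z)₄| for this nonzero z whose support is a proper subset of S. -/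

import Mathlib

open Matrix

lemma key_aux_stmt17 (u v w P1 P2 P3 P4 : ℝ) (hw : w ≠ 0)
    (e1 : P1 = u - v / 3 - w / 3) (e2 : P2 = -u / 3 + v - w / 3)
    (e3 : P3 = -u / 3 - v / 3 + w) (e4 : P4 = u / 3 + v / 3 - w / 2) :
    |P4| < max (|P1|) (max (|P2|) (|P3|)) := by
  by_contra hcon
  push_neg at hcon
  have h1 : |P1| ≤ |P4| := le_trans (le_max_left _ _) hcon
  have h2 : |P2| ≤ |P4| := le_trans (le_trans (le_max_left _ _) (le_max_right _ _)) hcon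
  have h3 : |P3| ≤ |P4| := le_trans (le_trans (le_max_right _ _) (le_max_right _ _)) hcon
  rcases hw.lt_or_gt with hw' | hw' <;>
    rcases abs_cases P1 with ⟨a1, s1⟩ | ⟨a1, s1⟩ <;>
    rcases abs_cases P2 with ⟨a2, s2⟩ | ⟨a2, s2⟩ <;>
    rcases abs_cases P3 with ⟨a3, s3⟩ | ⟨a3, s3⟩ <;>
    rcases abs_cases P4 with ⟨a4, s4⟩ | ⟨a4, s4⟩ <;>
    rw [a1, a4] at h1 <;> rw [a2, a4] at h2 <;> rw [a3, a4] at h3 <;>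
    linarith

set_option maxHeartbeats 2000000 in
/-- The counterexample matrix of Theorem 5.5: `A` has unit columns and is invertible
(so `A_{•S}`, `S = {1,2,3}`, has full column rank),
`‖(A_{•S}ᵀ A_{•S})⁻¹ A_{•S}ᵀ A_{•4}‖₁ = 1`, every `z` supported exactly on `S`
satisfies the strict OMP selection inequality, yet for `z = (1,1,0,0)ᵀ` (supported on a
proper subset of `S`) all four components of `AᵀA z` have absolute value `2/3`. -/
theorem stmt_17 (A : Matrix (Fin 4) (Fin 4) ℝ)
    (hA : A = !![(1 : ℝ), -1/3, -1/3, 1/3;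
                 0, 2 * Real.sqrt 2 / 3, -(Real.sqrt 2) / 3, Real.sqrt 2 / 3;
                 0, 0, Real.sqrt 6 / 3, -(Real.sqrt 6) / 12;
                 0, 0, 0, Real.sqrt 10 / 4]) :
    (∀ j : Fin 4, ∑ i, A i j ^ 2 = 1) ∧
    A.det ≠ 0 ∧
    LinearIndependent ℝ (fun j : Fin 3 => (fun i => A i (Fin.castSucc j))) ∧
    (∑ k : Fin 3,
      |(((A.submatrix id (Fin.castSucc : Fin 3 → Fin 4)).transpose *
          (A.submatrix id (Fin.castSucc : Fin 3 → Fin 4)))⁻¹.mulVec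
        ((A.submatrix id (Fin.castSucc : Fin 3 → Fin 4)).transpose.mulVec
          (fun i => A i 3))) k| = 1) ∧
    (∀ z : Fin 4 → ℝ, z 3 = 0 → z 0 * z 1 * z 2 ≠ 0 →
      |(A.transpose * A).mulVec z 3| <
        max (|(A.transpose * A).mulVec z 0|)
          (max (|(A.transpose * A).mulVec z 1|) (|(A.transpose * A).mulVec z 2|))) ∧
    (∀ j : Fin 4, |(A.transpose * A).mulVec ![1, 1, 0, 0] j| = 2/3) := by
  have h2 : Real.sqrt 2 ^ 2 = 2 := Real.sq_sqrt (by norm_num)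
  have h6 : Real.sqrt 6 ^ 2 = 6 := Real.sq_sqrt (by norm_num)
  have h10 : Real.sqrt 10 ^ 2 = 10 := Real.sq_sqrt (by norm_num)
  have s2 : 0 < Real.sqrt 2 := Real.sqrt_pos.2 (by norm_num)
  have s6 : 0 < Real.sqrt 6 := Real.sqrt_pos.2 (by norm_num)
  have s10 : 0 < Real.sqrt 10 := Real.sqrt_pos.2 (by norm_num)
  have hG : A.transpose * A =
      !![(1:ℝ),-1/3,-1/3,1/3; -1/3,1,-1/3,1/3; -1/3,-1/3,1,-1/2; 1/3,1/3,-1/2,1] := by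
    rw [hA]
    ext i j
    simp only [Matrix.mul_apply, Matrix.transpose_apply, Fin.sum_univ_four]
    fin_cases i <;> fin_cases j <;> norm_num [Matrix.vecHead, Matrix.vecTail, Matrix.cons_val_two, Matrix.cons_val_three] <;>
      nlinarith [h2, h6, h10]
  refine ⟨?_, ?_, ?_, ?_, ?_, ?_⟩
  · -- unit columns
    intro j
    have hd := congrFun (congrFun hG j) j
    simp only [Matrix.mul_apply, Matrix.transpose_apply] at hd
    rw [show (∑ i, A i j ^ 2) = ∑ i, A i j * A i j from by
      refine Finset.sum_congr rfl fun i _ => by ring]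
    rw [hd]
    fin_cases j <;> norm_num
  · -- det ≠ 0
    rw [hA]
    simp [Matrix.det_succ_row_zero, Fin.sum_univ_succ]
  · -- linear independence of the first three columns
    rw [Fintype.linearIndependent_iff]
    intro g hg
    have e2' := congrFun hg 2
    have e1' := congrFun hg 1
    have e0' := congrFun hg 0
    simp only [Finset.sum_apply, Pi.smul_apply, smul_eq_mul, Fin.sum_univ_three,
      Pi.zero_apply, hA] at e2' e1' e0'
    norm_num [Fin.castSucc, Fin.castAdd, Fin.castLE, Matrix.vecHead, Matrix.vecTail,
        Matrix.cons_val_two, Matrix.cons_val_three]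
      at e2' e1' e0'
    have hg2 : g 2 = 0 := e2'
    have hg1 : g 1 = 0 := by
      rw [hg2] at e1'
      have h : g 1 * (2 * Real.sqrt 2 / 3) = 0 := by linarith
      rcases mul_eq_zero.1 h with h' | h'
      · exact h'
      · exact absurd h' (by positivity)
    have hg0 : g 0 = 0 := by
      rw [hg1, hg2] at e0'
      linarith
    intro j; fin_cases j <;> assumption
  · -- the 1-norm computation
    have hGS : (A.submatrix id (Fin.castSucc : Fin 3 → Fin 4)).transpose *
        (A.submatrix id (Fin.castSucc : Fin 3 → Fin 4)) =
        !![(1:ℝ),-1/3,-1/3; -1/3,1,-1/3; -1/3,-1/3,1] := by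
      ext i j
      simp only [Matrix.mul_apply, Matrix.transpose_apply, Matrix.submatrix_apply,
        id_eq, Fin.sum_univ_four]
      fin_cases i <;> fin_cases j <;>
        norm_num [hA, Fin.castSucc, Fin.castAdd, Fin.castLE, Matrix.vecHead, Matrix.vecTail,
          Matrix.cons_val_two, Matrix.cons_val_three] <;>
        nlinarith [h2, h6, h10]
    have hy : (A.submatrix id (Fin.castSucc : Fin 3 → Fin 4)).transpose.mulVec
        (fun i => A i 3) = ![1/3, 1/3, -1/2] := by
      funext k
      simp only [Matrix.mulVec, dotProduct, Matrix.transpose_apply,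
        Matrix.submatrix_apply, id_eq, Fin.sum_univ_four]
      fin_cases k <;>
        norm_num [hA, Fin.castSucc, Fin.castAdd, Fin.castLE, Matrix.vecHead, Matrix.vecTail,
          Matrix.cons_val_two, Matrix.cons_val_three] <;>
        nlinarith [h2, h6, h10]
    rw [hGS, hy]
    have hdet : IsUnit (!![(1:ℝ),-1/3,-1/3; -1/3,1,-1/3; -1/3,-1/3,1]).det := by
      rw [Matrix.det_fin_three]
      norm_num [Matrix.vecHead, Matrix.vecTail, Matrix.cons_val_two, Matrix.cons_val_three]
    have hmul : (!![(1:ℝ),-1/3,-1/3; -1/3,1,-1/3; -1/3,-1/3,1]).mulVec ![3/8, 3/8, -1/4]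
        = ![1/3, 1/3, -1/2] := by
      funext k
      fin_cases k <;>
        norm_num [Matrix.mulVec, dotProduct, Fin.sum_univ_three,
          Matrix.vecHead, Matrix.vecTail, Matrix.cons_val_two, Matrix.cons_val_three]
    rw [← hmul, Matrix.mulVec_mulVec, Matrix.nonsing_inv_mul _ hdet, Matrix.one_mulVec,
      Fin.sum_univ_three]
    norm_num [Matrix.vecHead, Matrix.vecTail, abs_of_nonneg, Matrix.cons_val_two,
      Matrix.cons_val_three]
  · -- strict OMP inequality
    intro z hz3 hz
    have hw : z 2 ≠ 0 := right_ne_zero_of_mul hz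
    have m0 : (A.transpose * A).mulVec z 0 = z 0 - z 1 / 3 - z 2 / 3 := by
      rw [hG]; simp [Matrix.mulVec, dotProduct, Fin.sum_univ_four,
        Matrix.vecHead, Matrix.vecTail, hz3]; ring
    have m1 : (A.transpose * A).mulVec z 1 = -(z 0) / 3 + z 1 - z 2 / 3 := by
      rw [hG]; simp [Matrix.mulVec, dotProduct, Fin.sum_univ_four,
        Matrix.vecHead, Matrix.vecTail, hz3]; ring
    have m2 : (A.transpose * A).mulVec z 2 = -(z 0) / 3 - z 1 / 3 + z 2 := by
      rw [hG]; simp [Matrix.mulVec, dotProduct, Fin.sum_univ_four,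
        Matrix.vecHead, Matrix.vecTail, hz3]; ring
    have m3 : (A.transpose * A).mulVec z 3 = z 0 / 3 + z 1 / 3 - z 2 / 2 := by
      rw [hG]; simp [Matrix.mulVec, dotProduct, Fin.sum_univ_four,
        Matrix.vecHead, Matrix.vecTail, hz3]; ring
    exact key_aux_stmt17 (z 0) (z 1) (z 2) _ _ _ _ hw m0 m1 m2 m3
  · -- the equality example
    intro j
    rw [hG]
    fin_cases j <;>
      norm_num [Matrix.mulVec, dotProduct, Fin.sum_univ_four,
        Matrix.vecHead, Matrix.vecTail, abs_eq, Matrix.cons_val_two, Matrix.cons_val_three]
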